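/- The map T on n×n matrices defined by (T(S))(u,u) = 1 and (T(S))(u,v) = (c/(|N(u)||N(v)|)) Σ_{u'∈N(u),v'∈N(v)} S(u',v') for u≠v is a contraction with Lipschitz constant c in the max-norm: ‖T(S₁) − T(S₂)‖_max ≤ c·‖S₁ − S₂‖_max. -/

import Mathlib

open Matrix BigOperators Finset

variable {V : Type*} [Fintype V] [DecidableEq V]

/-- Random-walk transition matrix `P = D⁻¹ A`. -/
noncomputable def walkP (G : SimpleGraph V) [DecidableRel G.Adj] : Matrix V V ℝ :=
  fun u v => if G.Adj u v then (1 : ℝ) / (G.degree u) else 0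

/-- The SimRank update operator. -/
noncomputable def Tmap (G : SimpleGraph V) [DecidableRel G.Adj] (c : ℝ) (S : Matrix V V ℝ) :
    Matrix V V ℝ := fun u v => if u = v then 1 else
  c / ((G.degree u : ℝ) * (G.degree v : ℝ)) *
    ∑ u' ∈ G.neighborFinset u, ∑ v' ∈ G.neighborFinset v, S u' v'

theorem stmt12 (G : SimpleGraph V) [DecidableRel G.Adj]
    (hdeg : ∀ v : V, 0 < G.degree v) (c : ℝ) (hc : c ∈ Set.Ioo (0:ℝ) 1)
    (S₁ S₂ : Matrix V V ℝ) (M : ℝ) (h : ∀ u v, |S₁ u v - S₂ u v| ≤ M) :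
    ∀ u v : V, |Tmap G c S₁ u v - Tmap G c S₂ u v| ≤ c * M := by
  intro u v
  have hM : 0 ≤ M := (abs_nonneg _).trans (h u v)
  have hc0 : 0 < c := hc.1
  by_cases huv : u = v
  · simp [Tmap, huv]
    positivity
  · have hdu : (0:ℝ) < (G.degree u : ℝ) := by exact_mod_cast hdeg u
    have hdv : (0:ℝ) < (G.degree v : ℝ) := by exact_mod_cast hdeg v
    have hd : (0:ℝ) < (G.degree u : ℝ) * (G.degree v : ℝ) := mul_pos hdu hdv
    simp only [Tmap, if_neg huv]
    rw [← mul_sub]; simp only [← Finset.sum_sub_distrib]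
    have hsum : |∑ u' ∈ G.neighborFinset u, ∑ v' ∈ G.neighborFinset v, (S₁ u' v' - S₂ u' v')|
        ≤ (G.degree u : ℝ) * (G.degree v : ℝ) * M := by
      calc |∑ u' ∈ G.neighborFinset u, ∑ v' ∈ G.neighborFinset v, (S₁ u' v' - S₂ u' v')|
          ≤ ∑ u' ∈ G.neighborFinset u, ∑ v' ∈ G.neighborFinset v, |S₁ u' v' - S₂ u' v'| := by
            refine (Finset.abs_sum_le_sum_abs _ _).trans ?_
            exact Finset.sum_le_sum fun i _ => Finset.abs_sum_le_sum_abs _ _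
        _ ≤ ∑ u' ∈ G.neighborFinset u, ∑ v' ∈ G.neighborFinset v, M := by
            exact Finset.sum_le_sum fun i _ => Finset.sum_le_sum fun j _ => h i j
        _ = (G.degree u : ℝ) * (G.degree v : ℝ) * M := by
            simp [Finset.sum_const, G.card_neighborFinset_eq_degree]
            ring
    rw [abs_mul, abs_div, abs_of_pos hc0, abs_of_pos hd]
    rw [div_mul_eq_mul_div, div_le_iff₀ hd]
    calc c * |∑ u' ∈ G.neighborFinset u, ∑ v' ∈ G.neighborFinset v, (S₁ u' v' - S₂ u' v')|
        ≤ c * ((G.degree u : ℝ) * (G.degree v : ℝ) * M) := by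
          exact mul_le_mul_of_nonneg_left hsum hc0.le
      _ = c * M * ((G.degree u : ℝ) * (G.degree v : ℝ)) := by ring
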